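/- Let M ∈ ℝ^{s×s} be symmetric positive definite, ε > 0, K, L ∈ ℝ^{m×s}, let b̲ ≤ b̄ be real numbers, and let α₁, …, α_r ∈ ℝ^{1×m} be row vectors. Then the constraints αᵢ(K + bL)x ≤ 1 for all i ∈ {1, …, r} hold for every x ∈ ℝ^s with xᵀMx ≤ ε² and every b ∈ [b̲, b̄] ∪ {0} if and only if for every i ∈ {1, …, r}: αᵢ K M⁻¹ Kᵀ αᵢᵀ ≤ 1/ε², αᵢ (K + b̲L) M⁻¹ (K + b̲L)ᵀ αᵢᵀ ≤ 1/ε², and αᵢ (K + b̄L) M⁻¹ (K + b̄L)ᵀ αᵢᵀ ≤ 1/ε². -/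

import Mathlib

open Matrix

private lemma dot_mulVec_symm {s : ℕ} {M : Matrix (Fin s) (Fin s) ℝ}
    (hM : Mᵀ = M) (x w : Fin s → ℝ) :
    x ⬝ᵥ (M *ᵥ w) = w ⬝ᵥ (M *ᵥ x) := by
  rw [Matrix.dotProduct_mulVec, ← Matrix.mulVec_transpose, hM, dotProduct_comm]

/-- support function characterization: `v ⬝ x ≤ 1` on the ellipsoid iff `vᵀ M⁻¹ v ≤ 1/ε²`. -/
private lemma support_iff {s : ℕ} {M : Matrix (Fin s) (Fin s) ℝ} (hM : M.PosDef)
    {ε : ℝ} (hε : 0 < ε) (v : Fin s → ℝ) :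
    (∀ x : Fin s → ℝ, x ⬝ᵥ (M *ᵥ x) ≤ ε ^ 2 → v ⬝ᵥ x ≤ 1) ↔
      v ⬝ᵥ (M⁻¹ *ᵥ v) ≤ 1 / ε ^ 2 := by
  have hsymm : Mᵀ = M := hM.isHermitian
  set w : Fin s → ℝ := M⁻¹ *ᵥ v with hw
  have hMw : M *ᵥ w = v := by
    rw [hw, Matrix.mulVec_mulVec, Matrix.mul_nonsing_inv _ ((Matrix.isUnit_iff_isUnit_det M).mp hM.isUnit),
      Matrix.one_mulVec]
  have hc_eq : v ⬝ᵥ w = w ⬝ᵥ (M *ᵥ w) := by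
    rw [← hMw]; exact dotProduct_comm _ _
  have hc0 : 0 ≤ v ⬝ᵥ w := by
    rw [hc_eq]; simpa using hM.posSemidef.dotProduct_mulVec_nonneg w
  constructor
  · intro h
    rcases eq_or_lt_of_le hc0 with hc | hc
    · rw [← hc]; positivity
    · have hs : 0 < Real.sqrt (v ⬝ᵥ w) := Real.sqrt_pos.mpr hc
      have hs2 : Real.sqrt (v ⬝ᵥ w) * Real.sqrt (v ⬝ᵥ w) = v ⬝ᵥ w :=
        Real.mul_self_sqrt hc0
      set a : ℝ := ε / Real.sqrt (v ⬝ᵥ w) with ha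
      have hxq : (a • w) ⬝ᵥ (M *ᵥ (a • w)) = ε ^ 2 := by
        have : (a • w) ⬝ᵥ (M *ᵥ (a • w)) = a * a * (w ⬝ᵥ (M *ᵥ w)) := by
          simp [Matrix.mulVec_smul, smul_dotProduct, dotProduct_smul, smul_eq_mul]
          ring
        rw [this, ← hc_eq, ha]
        field_simp
        nlinarith [hs2]
      have key := h (a • w) (le_of_eq hxq)
      have hkey : a * (v ⬝ᵥ w) ≤ 1 := by
        simpa [dotProduct_smul, smul_eq_mul, mul_comm] using key
      rw [ha, div_mul_eq_mul_div, div_le_one hs] at hkey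
      rw [le_div_iff₀ (by positivity)]
      nlinarith [mul_self_le_mul_self (by positivity : (0:ℝ) ≤ ε * (v ⬝ᵥ w)) hkey,
        hs2, hc, hε]
  · intro h x hx
    have hvx : v ⬝ᵥ x = w ⬝ᵥ (M *ᵥ x) := by
      rw [← hMw, dotProduct_comm, dot_mulVec_symm hsymm]
    by_cases hw0 : w = 0
    · rw [hvx, hw0]; simp
    · set p : ℝ := w ⬝ᵥ (M *ᵥ x) with hp
      set q : ℝ := x ⬝ᵥ (M *ᵥ x) with hq
      set c : ℝ := w ⬝ᵥ (M *ᵥ w) with hcdef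
      have hcpos : 0 < c := by
        simpa using hM.dotProduct_mulVec_pos hw0
      have hqnn : 0 ≤ q := by
        simpa using hM.posSemidef.dotProduct_mulVec_nonneg x
      have hcle : c ≤ 1 / ε ^ 2 := by rw [← hc_eq]; exact h
      have hxw : x ⬝ᵥ (M *ᵥ w) = p := dot_mulVec_symm hsymm x w
      have hz : 0 ≤ (c • x - p • w) ⬝ᵥ (M *ᵥ (c • x - p • w)) := by
        simpa using hM.posSemidef.dotProduct_mulVec_nonneg (c • x - p • w)
      have hexp : (c • x - p • w) ⬝ᵥ (M *ᵥ (c • x - p • w))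
          = c * c * q - c * (p * p) := by
        simp [Matrix.mulVec_sub, Matrix.mulVec_smul, sub_dotProduct,
          dotProduct_sub, smul_dotProduct, dotProduct_smul, smul_eq_mul, hxw,
          ← hp, ← hq, ← hcdef]
        ring
      rw [hexp] at hz
      have h1 : c * q ≤ 1 := by
        calc c * q ≤ (1 / ε ^ 2) * ε ^ 2 :=
              mul_le_mul hcle hx hqnn (by positivity)
          _ = 1 := by field_simp
      have h2 : p * p ≤ c * q := le_of_mul_le_mul_left (by nlinarith) hcpos
      rw [hvx]
      nlinarith [h1, h2]

private lemma affine_le {A B bl bu b : ℝ} (h1 : bl ≤ b) (h2 : b ≤ bu)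
    (hl : A + bl * B ≤ 1) (hu : A + bu * B ≤ 1) : A + b * B ≤ 1 := by
  rcases le_total 0 B with hB | hB
  · nlinarith
  · nlinarith

theorem constraints_on_ellipsoid_iff
    {s m r : ℕ} (M : Matrix (Fin s) (Fin s) ℝ) (hM : M.PosDef)
    (ε : ℝ) (hε : 0 < ε) (K L : Matrix (Fin m) (Fin s) ℝ)
    (bl bu : ℝ) (hb : bl ≤ bu) (α : Fin r → (Fin m → ℝ)) :
    (∀ i : Fin r, ∀ b ∈ Set.Icc bl bu ∪ {(0 : ℝ)}, ∀ x : Fin s → ℝ,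
        x ⬝ᵥ (M *ᵥ x) ≤ ε ^ 2 → (α i) ⬝ᵥ ((K + b • L) *ᵥ x) ≤ 1) ↔
    (∀ i : Fin r,
        (α i) ⬝ᵥ ((K * M⁻¹ * Kᵀ) *ᵥ (α i)) ≤ 1 / ε ^ 2 ∧
        (α i) ⬝ᵥ (((K + bl • L) * M⁻¹ * (K + bl • L)ᵀ) *ᵥ (α i)) ≤ 1 / ε ^ 2 ∧
        (α i) ⬝ᵥ (((K + bu • L) * M⁻¹ * (K + bu • L)ᵀ) *ᵥ (α i)) ≤ 1 / ε ^ 2) := by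
  -- rewrite both sides in terms of `v A i := Aᵀ *ᵥ α i`
  have hlin : ∀ (A : Matrix (Fin m) (Fin s) ℝ) (u : Fin m → ℝ) (x : Fin s → ℝ),
      u ⬝ᵥ (A *ᵥ x) = (Aᵀ *ᵥ u) ⬝ᵥ x := by
    intro A u x
    rw [Matrix.dotProduct_mulVec, Matrix.mulVec_transpose]
  have hquad : ∀ (A : Matrix (Fin m) (Fin s) ℝ) (u : Fin m → ℝ),
      u ⬝ᵥ ((A * M⁻¹ * Aᵀ) *ᵥ u) = (Aᵀ *ᵥ u) ⬝ᵥ (M⁻¹ *ᵥ (Aᵀ *ᵥ u)) := by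
    intro A u
    rw [← Matrix.mulVec_mulVec, ← Matrix.mulVec_mulVec, hlin]
  constructor
  · intro h i
    refine ⟨?_, ?_, ?_⟩
    · rw [hquad]
      refine (support_iff hM hε _).mp (fun x hx => ?_)
      rw [← hlin]
      simpa using h i 0 (Or.inr rfl) x hx
    · rw [hquad]
      refine (support_iff hM hε _).mp (fun x hx => ?_)
      rw [← hlin]
      exact h i bl (Or.inl ⟨le_refl _, hb⟩) x hx
    · rw [hquad]
      refine (support_iff hM hε _).mp (fun x hx => ?_)
      rw [← hlin]
      exact h i bu (Or.inl ⟨hb, le_refl _⟩) x hx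
  · intro h i b hbmem x hx
    rcases hbmem with hbmem | hbmem
    · -- b ∈ [bl, bu]
      have hval : ∀ c : ℝ, (α i) ⬝ᵥ ((K + c • L) *ᵥ x)
          = (α i) ⬝ᵥ (K *ᵥ x) + c * ((α i) ⬝ᵥ (L *ᵥ x)) := by
        intro c
        simp [Matrix.add_mulVec, Matrix.smul_mulVec, dotProduct_add,
          dotProduct_smul, smul_eq_mul]
      have hl : (α i) ⬝ᵥ (K *ᵥ x) + bl * ((α i) ⬝ᵥ (L *ᵥ x)) ≤ 1 := by
        rw [← hval]
        rw [hlin]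
        exact (support_iff hM hε _).mpr (by rw [← hquad]; exact (h i).2.1) x hx
      have hu : (α i) ⬝ᵥ (K *ᵥ x) + bu * ((α i) ⬝ᵥ (L *ᵥ x)) ≤ 1 := by
        rw [← hval]
        rw [hlin]
        exact (support_iff hM hε _).mpr (by rw [← hquad]; exact (h i).2.2) x hx
      rw [hval]
      exact affine_le hbmem.1 hbmem.2 hl hu
    · -- b = 0
      rw [Set.mem_singleton_iff.mp hbmem]
      have : (α i) ⬝ᵥ ((K + (0:ℝ) • L) *ᵥ x) = (α i) ⬝ᵥ (K *ᵥ x) := by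
        simp
      rw [this, hlin]
      exact (support_iff hM hε _).mpr (by rw [← hquad]; exact (h i).1) x hx
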